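/- Let X be a mesh of period m and p = 2s. Define Δ_j[f] = p_{j−1}[f](x_j) − f(x_j), where p_{j−1}[f] is the degree-p cell-average reconstruction polynomial centered at cell j−1. Then Δ_m[x^{p+1}] = Δ_0[x^{p+1}]. Consequently, the truncation error ε_j = (Δ_{j+1}[x^{p+1}] − Δ_j[x^{p+1}])/h_{j+1/2} of the finite-volume scheme on the monomial x^{p+1} satisfies the zero weighted average Σ_{j=0}^{m−1} h_{j+1/2} ε_j = 0. -/

import Mathlib

open scoped Real

set_option linter.unusedVariables false

open Polynomial

noncomputable def antider (p : ℝ[X]) : ℝ[X] :=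
  ∑ k ∈ Finset.range (p.natDegree + 1), C (p.coeff k / (k + 1)) * X ^ (k + 1)

lemma derivative_antider (p : ℝ[X]) : (antider p).derivative = p := by
  rw [antider, derivative_sum]
  conv_rhs => rw [p.as_sum_range_C_mul_X_pow]
  refine Finset.sum_congr rfl fun k _ => ?_
  rw [derivative_C_mul, derivative_X_pow]
  have : ((k:ℝ) + 1) ≠ 0 := by positivity
  rw [← mul_assoc, ← C_mul]
  push_cast
  rw [div_mul_cancel₀ _ this]

lemma natDegree_antider_le (p : ℝ[X]) : (antider p).natDegree ≤ p.natDegree + 1 := by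
  refine Polynomial.natDegree_sum_le_of_forall_le _ _ fun k hk => ?_
  refine (Polynomial.natDegree_C_mul_le _ _).trans ?_
  simp only [Polynomial.natDegree_X_pow]
  exact Nat.add_le_add_right (Nat.lt_succ_iff.mp (Finset.mem_range.mp hk)) 1

lemma integral_poly (p : ℝ[X]) (a b : ℝ) :
    (∫ t in a..b, (p.derivative).eval t) = p.eval b - p.eval a := by
  refine intervalIntegral.integral_eq_sub_of_hasDerivAt (fun t _ => p.hasDerivAt t) ?_
  exact (Polynomial.continuous _).intervalIntegrable _ _

lemma zero_of_integrals (n : ℕ) (R : ℝ[X]) (hdeg : R.natDegree ≤ n)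
    (y : ℤ → ℝ) (hy : StrictMono y) (a : ℤ)
    (h : ∀ k ∈ Finset.Icc a (a + n), (∫ t in y k..y (k + 1), R.eval t) = 0) :
    R = 0 := by
  set Q := antider R with hQdef
  have hQ : Q.derivative = R := derivative_antider R
  have key : ∀ k, a ≤ k → k ≤ a + n + 1 → Q.eval (y k) = Q.eval (y a) := by
    intro k hk
    refine Int.le_induction (motive := fun k _ => k ≤ a + n + 1 → Q.eval (y k) = Q.eval (y a)) ?_ ?_ k hk
    · intro _; rfl
    · intro k hk ih hk1
      have h0 := h k (Finset.mem_Icc.mpr ⟨hk, by omega⟩)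
      rw [← hQ, integral_poly] at h0
      have := ih (by omega)
      linarith
  set G := Q - C (Q.eval (y a)) with hG
  have hG0 : G = 0 := by
    refine eq_zero_of_natDegree_lt_card_of_eval_eq_zero' G
      ((Finset.Icc a (a + n + 1)).image y) ?_ ?_
    · intro i hi
      obtain ⟨k, hk, rfl⟩ := Finset.mem_image.mp hi
      rw [Finset.mem_Icc] at hk
      simp [hG, key k hk.1 hk.2]
    · rw [Finset.card_image_of_injective _ hy.injective, Int.card_Icc]
      have h1 : G.natDegree ≤ n + 1 := by
        refine (Polynomial.natDegree_sub_le _ _).trans ?_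
        simp only [Polynomial.natDegree_C]
        exact max_le (natDegree_antider_le R |>.trans (by omega)) (by omega)
      have : (a + ↑n + 1 + 1 - a).toNat = n + 2 := by omega
      omega
  have : Q = C (Q.eval (y a)) := by rw [← sub_eq_zero]; exact hG0
  rw [← hQ, this, derivative_C]

/-- With `P j` the degree-`≤ 2s` reconstruction polynomial of
`f(x) = x^{2s+1}` on cells `j−s, …, j+s` of a mesh of period `m`, and
`Δ j = P_{j−1}(x_j) − x_j^{2s+1}`, one has `Δ_m = Δ_0`, and the weighted average of the
truncation error `ε_j = (Δ_{j+1} − Δ_j)/h_{j+1/2}` over one period vanishes: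
`Σ_{j<m} h_{j+1/2} ε_j = 0`. -/
theorem stmt_9 (s m N : ℕ) (hN : 0 < N) (hm : 0 < m)
    (x : ℤ → ℝ) (hmono : StrictMono x)
    (hperN : ∀ j : ℤ, x (j + N) = x j + 2 * π)
    (hperm : ∀ j : ℤ, x (j + m) = x j + m * (2 * π / N))
    (P : ℤ → Polynomial ℝ)
    (hdeg : ∀ j : ℤ, (P j).degree ≤ (2 * s : ℕ))
    (hP : ∀ j : ℤ, ∀ k ∈ Finset.Icc (-(s : ℤ)) (s : ℤ),
      (∫ t in (x (j + k))..(x (j + k + 1)), (P j).eval t)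
        = ∫ t in (x (j + k))..(x (j + k + 1)), t ^ (2 * s + 1)) :
    ((P ((m : ℤ) - 1)).eval (x m) - (x m) ^ (2 * s + 1)
        = (P (-1)).eval (x 0) - (x 0) ^ (2 * s + 1))
    ∧ ∑ j ∈ Finset.range m,
        (x (j + 1) - x j) *
          ((((P ((j : ℤ) + 1 - 1)).eval (x (j + 1)) - (x (j + 1)) ^ (2 * s + 1))
            - ((P ((j : ℤ) - 1)).eval (x j) - (x j) ^ (2 * s + 1)))
            / (x (j + 1) - x j)) = 0 := by
  set c : ℝ := m * (2 * π / N) with hcdef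
  set Q : ℝ[X] := (P (-1)).comp (X - C c) with hQdef
  set D : ℝ[X] := X ^ (2 * s + 1) - (X - C c) ^ (2 * s + 1) with hDdef
  set R : ℝ[X] := P ((m : ℤ) - 1) - (Q + D) with hRdef
  have hdegP : ∀ j, (P j).natDegree ≤ 2 * s := fun j =>
    Polynomial.natDegree_le_iff_degree_le.mpr (hdeg j)
  have hQdeg : Q.natDegree ≤ 2 * s := by
    rw [hQdef, Polynomial.natDegree_comp]
    simpa [Polynomial.natDegree_X_sub_C] using hdegP (-1)
  have hmon : ((X : ℝ[X]) - C c).Monic := Polynomial.monic_X_sub_C c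
  have h1 : (((X : ℝ[X]) - C c) ^ (2 * s + 1)).natDegree = 2 * s + 1 := by
    rw [Polynomial.natDegree_pow, Polynomial.natDegree_X_sub_C, mul_one]
  have hDdeg : D.natDegree ≤ 2 * s := by
    refine Polynomial.natDegree_le_iff_coeff_eq_zero.mpr fun k hk => ?_
    rw [hDdef, Polynomial.coeff_sub, Polynomial.coeff_X_pow]
    by_cases hke : k = 2 * s + 1
    · subst hke
      have h2 : (((X : ℝ[X]) - C c) ^ (2 * s + 1)).coeff (2 * s + 1) = 1 := by
        have := (hmon.pow (2 * s + 1)).coeff_natDegree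
        rwa [h1] at this
      simp [h2]
    · have hk2 : 2 * s + 1 < k := by omega
      rw [Polynomial.coeff_eq_zero_of_natDegree_lt (by rw [h1]; omega)]
      simp [hke]
  have hRdeg : R.natDegree ≤ 2 * s := by
    refine (Polynomial.natDegree_sub_le _ _).trans (max_le (hdegP _) ?_)
    exact (Polynomial.natDegree_add_le _ _).trans (max_le hQdeg hDdeg)
  have hshift : ∀ k : ℤ, x ((m : ℤ) - 1 + k) = x (-1 + k) + c := by
    intro k
    have := hperm (-1 + k)
    rw [show (-1 + k + (m : ℤ)) = (m : ℤ) - 1 + k by ring] at this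
    exact this
  have key : ∀ k ∈ Finset.Icc ((m : ℤ) - 1 - s) ((m : ℤ) - 1 - s + (2 * s : ℕ)),
      (∫ t in x k..x (k + 1), R.eval t) = 0 := by
    intro k hk
    rw [Finset.mem_Icc] at hk
    set k' : ℤ := k - ((m : ℤ) - 1) with hk'
    have hk'mem : k' ∈ Finset.Icc (-(s : ℤ)) (s : ℤ) := by
      rw [Finset.mem_Icc]
      push_cast at hk ⊢
      omega
    have e1 : k = (m : ℤ) - 1 + k' := by omega
    have hA : x ((m : ℤ) - 1 + k') = x (-1 + k') + c := hshift k'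
    have hB : x ((m : ℤ) - 1 + k' + 1) = x (-1 + k' + 1) + c := by
      have := hshift (k' + 1)
      rw [show (m : ℤ) - 1 + (k' + 1) = (m : ℤ) - 1 + k' + 1 by ring,
        show (-1 : ℤ) + (k' + 1) = -1 + k' + 1 by ring] at this
      exact this
    have hInt1 := hP ((m : ℤ) - 1) k' hk'mem
    have hInt2 := hP (-1) k' hk'mem
    have hRe : (fun t : ℝ => R.eval t) = fun t : ℝ =>
        (P ((m : ℤ) - 1)).eval t - ((P (-1)).eval (t - c)
          + (t ^ (2 * s + 1) - (t - c) ^ (2 * s + 1))) := by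
      funext t
      simp [hRdef, hQdef, hDdef, Polynomial.eval_comp]
    rw [e1]
    have hsub1 : (∫ t in x ((m:ℤ)-1+k')..x ((m:ℤ)-1+k'+1), (P (-1)).eval (t - c))
        = ∫ t in x (-1+k')..x (-1+k'+1), (P (-1)).eval t := by
      rw [intervalIntegral.integral_comp_sub_right (fun t => (P (-1)).eval t) c, hA, hB]
      simp
    have hsub2 : (∫ t in x ((m:ℤ)-1+k')..x ((m:ℤ)-1+k'+1), (t - c) ^ (2*s+1))
        = ∫ t in x (-1+k')..x (-1+k'+1), t ^ (2*s+1) := by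
      rw [intervalIntegral.integral_comp_sub_right (fun t => t ^ (2*s+1)) c, hA, hB]
      simp
    have hi1 : IntervalIntegrable (fun t : ℝ => (P ((m:ℤ)-1)).eval t) MeasureTheory.volume
        (x ((m:ℤ)-1+k')) (x ((m:ℤ)-1+k'+1)) :=
      (Polynomial.continuous _).intervalIntegrable _ _
    have hi2 : IntervalIntegrable (fun t : ℝ => (P (-1)).eval (t - c)) MeasureTheory.volume
        (x ((m:ℤ)-1+k')) (x ((m:ℤ)-1+k'+1)) :=
      ((Polynomial.continuous _).comp (continuous_id.sub continuous_const)).intervalIntegrable _ _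
    have hi3 : IntervalIntegrable (fun t : ℝ => t ^ (2*s+1)) MeasureTheory.volume
        (x ((m:ℤ)-1+k')) (x ((m:ℤ)-1+k'+1)) :=
      (continuous_pow _).intervalIntegrable _ _
    have hi4 : IntervalIntegrable (fun t : ℝ => (t - c) ^ (2*s+1)) MeasureTheory.volume
        (x ((m:ℤ)-1+k')) (x ((m:ℤ)-1+k'+1)) :=
      (((continuous_id.sub continuous_const)).pow _).intervalIntegrable _ _
    rw [show (∫ t in x ((m:ℤ)-1+k')..x ((m:ℤ)-1+k'+1), R.eval t)
        = ∫ t in x ((m:ℤ)-1+k')..x ((m:ℤ)-1+k'+1),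
            ((P ((m : ℤ) - 1)).eval t - ((P (-1)).eval (t - c)
              + (t ^ (2 * s + 1) - (t - c) ^ (2 * s + 1)))) by
      exact intervalIntegral.integral_congr (fun t _ => by
        simp [hRdef, hQdef, hDdef, Polynomial.eval_comp])]
    rw [intervalIntegral.integral_sub hi1 (hi2.add (hi3.sub hi4)),
      intervalIntegral.integral_add hi2 (hi3.sub hi4),
      intervalIntegral.integral_sub hi3 hi4, hsub1, hsub2]
    rw [hInt1]
    rw [hInt2]
    ring
  have hR0 : R = 0 :=
    zero_of_integrals (2 * s) R hRdeg x hmono ((m : ℤ) - 1 - s) key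
  have hPeq : P ((m : ℤ) - 1) = Q + D := by
    have := sub_eq_zero.mp hR0
    exact this
  have hx0 : x (m : ℤ) = x 0 + c := by
    have := hperm 0
    rwa [zero_add] at this
  have part1 : (P ((m : ℤ) - 1)).eval (x m) - (x m) ^ (2 * s + 1)
      = (P (-1)).eval (x 0) - (x 0) ^ (2 * s + 1) := by
    rw [hPeq]
    have : x (m : ℤ) - c = x 0 := by rw [hx0]; ring
    simp only [Polynomial.eval_add, hQdef, hDdef, Polynomial.eval_comp,
      Polynomial.eval_sub, Polynomial.eval_pow, Polynomial.eval_X, Polynomial.eval_C, this]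
    ring
  refine ⟨part1, ?_⟩
  set g : ℕ → ℝ := fun j => (P ((j : ℤ) - 1)).eval (x j) - (x j) ^ (2 * s + 1) with hg
  have hne : ∀ j : ℕ, x ((j : ℤ) + 1) - x (j : ℤ) ≠ 0 := fun j =>
    sub_ne_zero.mpr (hmono (by omega : (j : ℤ) < (j : ℤ) + 1)).ne'
  have hterm : ∀ j ∈ Finset.range m,
      (x ((j : ℤ) + 1) - x j) *
          ((((P ((j : ℤ) + 1 - 1)).eval (x ((j : ℤ) + 1)) - (x ((j : ℤ) + 1)) ^ (2 * s + 1))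
            - ((P ((j : ℤ) - 1)).eval (x j) - (x j) ^ (2 * s + 1)))
            / (x ((j : ℤ) + 1) - x j)) = g (j + 1) - g j := by
    intro j _
    rw [mul_comm, div_mul_cancel₀ _ (hne j)]
    simp only [hg]
    push_cast
    ring_nf
  rw [Finset.sum_congr rfl hterm, Finset.sum_range_sub g]
  have hg0 : g 0 = (P (-1)).eval (x 0) - (x 0) ^ (2 * s + 1) := by
    simp only [hg]
    norm_num
  have hgm : g m = (P ((m : ℤ) - 1)).eval (x m) - (x m) ^ (2 * s + 1) := rfl
  rw [hgm, hg0, part1, sub_self]
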